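/- Let G be a bipartite graph, k a positive integer, and S and T two vertex covers of G of size at most k. Let η be an edit sequence valid at S with η(S) = T, and let (C, H) be an η-local crown. If H ⊆ S, C ∩ S = ∅, H ⊆ T, and C ∩ T = ∅, then η is not a shortest edit sequence transforming S to T: there exists a strictly shorter edit sequence valid at S transforming S to T. -/

import Mathlib

/-- A set of vertices is a vertex cover of `G` if it contains at least one
endpoint of every edge. -/
def IsVC {α : Type*} (G : SimpleGraph α) (S : Finset α) : Prop :=
  ∀ ⦃u v : α⦄, G.Adj u v → u ∈ S ∨ v ∈ S

/-- An edit marker: `(v, true)` adds the vertex `v`, `(v, false)` removes it. -/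
abbrev Edit (α : Type*) := α × Bool

/-- Apply a single edit operation to a set. -/
def applyEdit {α : Type*} [DecidableEq α] (Q : Finset α) (e : Edit α) : Finset α :=
  if e.2 then insert e.1 Q else Q.erase e.1

/-- Apply an edit sequence to a set. -/
def applySeq {α : Type*} [DecidableEq α] (Q : Finset α) : List (Edit α) → Finset α
  | [] => Q
  | e :: es => applySeq (applyEdit Q e) es

/-- An edit sequence is valid at `Q`: each addition adds a vertex not already
present, each removal removes a present vertex, and every intermediate set is
a vertex cover of `G` of size at most `k`. -/
def ValidAt {α : Type*} [DecidableEq α] (G : SimpleGraph α) (k : ℕ) :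
    Finset α → List (Edit α) → Prop
  | _, [] => True
  | Q, e :: es =>
      (e.2 = true → e.1 ∉ Q) ∧ (e.2 = false → e.1 ∈ Q) ∧
      IsVC G (applyEdit Q e) ∧ (applyEdit Q e).card ≤ k ∧ ValidAt G k (applyEdit Q e) es

/-- `add(η)`: the set of vertices added by the edit sequence `η`. -/
def addSet {α : Type*} [DecidableEq α] (η : List (Edit α)) : Finset α :=
  ((η.filter (fun e => e.2)).map Prod.fst).toFinset

/-- `rem(η)`: the set of vertices removed by the edit sequence `η`. -/
def remSet {α : Type*} [DecidableEq α] (η : List (Edit α)) : Finset α :=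
  ((η.filter (fun e => !e.2)).map Prod.fst).toFinset

/-- `touch(η)`: the set of vertices touched (added or removed) by `η`. -/
def touchSet {α : Type*} [DecidableEq α] (η : List (Edit α)) : Finset α :=
  (η.map Prod.fst).toFinset

section Aux

variable {V : Type} [DecidableEq V]

lemma mem_touchSet {l : List (Edit V)} {v : V} :
    v ∈ touchSet l ↔ ∃ e ∈ l, e.1 = v := by
  simp [touchSet, List.mem_map]

/-- The canonical transform: remove `C`, add `H`. -/
private def Ftr (C H Q : Finset V) : Finset V := (Q \ C) ∪ H

lemma Ftr_applyEdit (C H Q : Finset V) (e : Edit V) (h1 : e.1 ∉ C) (h2 : e.1 ∉ H) :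
    applyEdit (Ftr C H Q) e = Ftr C H (applyEdit Q e) := by
  cases hb : e.2 <;> ext v <;> by_cases hv : v = e.1 <;>
    simp [Ftr, applyEdit, hb, hv, h1, h2] <;> tauto

lemma Ftr_applyEdit_skip (C H Q : Finset V) (e : Edit V)
    (hCH : Disjoint C H) (h : e.1 ∈ C ∨ e.1 ∈ H) :
    Ftr C H (applyEdit Q e) = Ftr C H Q := by
  rcases h with h | h
  · have h2 : e.1 ∉ H := Finset.disjoint_left.mp hCH h
    cases hb : e.2 <;> ext v <;> by_cases hv : v = e.1 <;>
      simp [Ftr, applyEdit, hb, hv, h, h2] <;> tauto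
  · have h1 : e.1 ∉ C := fun hc => Finset.disjoint_left.mp hCH hc h
    cases hb : e.2 <;> ext v <;> by_cases hv : v = e.1 <;>
      simp [Ftr, applyEdit, hb, hv, h, h1] <;> tauto

lemma Ftr_isVC (G : SimpleGraph V) (C H Q : Finset V)
    (hCind : ∀ u ∈ C, ∀ v ∈ C, ¬ G.Adj u v)
    (hQ : IsVC G Q)
    (hP : ∀ c ∈ C, ∀ w, G.Adj c w → w ∈ H ∨ w ∈ Q) :
    IsVC G (Ftr C H Q) := by
  intro u v huv
  by_cases hu : u ∈ C
  · have hvC : v ∉ C := fun hv => hCind u hu v hv huv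
    rcases hP u hu v huv with h | h
    · exact Or.inr (Finset.mem_union_right _ h)
    · exact Or.inr (Finset.mem_union_left _ (Finset.mem_sdiff.mpr ⟨h, hvC⟩))
  · by_cases hv : v ∈ C
    · rcases hP v hv u huv.symm with h | h
      · exact Or.inl (Finset.mem_union_right _ h)
      · exact Or.inl (Finset.mem_union_left _ (Finset.mem_sdiff.mpr ⟨h, hu⟩))
    · rcases hQ huv with h | h
      · exact Or.inl (Finset.mem_union_left _ (Finset.mem_sdiff.mpr ⟨h, hu⟩))
      · exact Or.inr (Finset.mem_union_left _ (Finset.mem_sdiff.mpr ⟨h, hv⟩))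

lemma Ftr_card_le (G : SimpleGraph V) (C H Q : Finset V)
    (M : V → V) (hMinj : Set.InjOn M ↑H) (hMC : ∀ u ∈ H, M u ∈ C ∧ G.Adj u (M u))
    (hCH : Disjoint C H) (hQ : IsVC G Q) :
    (Ftr C H Q).card ≤ Q.card := by
  have hsub : Ftr C H Q ⊆ (Q \ C) ∪ (H \ Q) := by
    intro v hv
    rcases Finset.mem_union.mp hv with h | h
    · exact Finset.mem_union_left _ h
    · by_cases hvQ : v ∈ Q
      · exact Finset.mem_union_left _ (Finset.mem_sdiff.mpr
          ⟨hvQ, fun hc => Finset.disjoint_left.mp hCH hc h⟩)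
      · exact Finset.mem_union_right _ (Finset.mem_sdiff.mpr ⟨h, hvQ⟩)
  have h1 : (Ftr C H Q).card ≤ (Q \ C).card + (H \ Q).card :=
    le_trans (Finset.card_le_card hsub) (Finset.card_union_le _ _)
  have h2 : (H \ Q).card ≤ (Q ∩ C).card := by
    apply Finset.card_le_card_of_injOn M
    · intro h hh
      have hhH : h ∈ H := (Finset.mem_sdiff.mp hh).1
      have hhQ : h ∉ Q := (Finset.mem_sdiff.mp hh).2
      obtain ⟨hMc, hadj⟩ := hMC h hhH
      rcases hQ hadj with h' | h'
      · exact absurd h' hhQ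
      · exact Finset.mem_inter.mpr ⟨h', hMc⟩
    · intro a ha b hb hab
      exact hMinj (by exact_mod_cast (Finset.mem_sdiff.mp ha).1)
        (by exact_mod_cast (Finset.mem_sdiff.mp hb).1) hab
  have h3 : (Q ∩ C).card + (Q \ C).card = Q.card := Finset.card_inter_add_card_sdiff Q C
  omega

lemma main_induction (G : SimpleGraph V) (k : ℕ) (C H : Finset V)
    (M : V → V) (hMinj : Set.InjOn M ↑H) (hMC : ∀ u ∈ H, M u ∈ C ∧ G.Adj u (M u))
    (hCH : Disjoint C H)
    (hCind : ∀ u ∈ C, ∀ v ∈ C, ¬ G.Adj u v) :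
    ∀ (l : List (Edit V)) (Q : Finset V),
      ValidAt G k Q l →
      (∀ c ∈ C, ∀ w, G.Adj c w → w ∉ H → (w ∈ Q ∧ w ∉ touchSet l)) →
      ValidAt G k (Ftr C H Q) (l.filter (fun e => decide (e.1 ∉ C ∧ e.1 ∉ H))) ∧
      applySeq (Ftr C H Q) (l.filter (fun e => decide (e.1 ∉ C ∧ e.1 ∉ H)))
        = Ftr C H (applySeq Q l) := by
  intro l
  induction l with
  | nil => intro Q _ _; exact ⟨trivial, rfl⟩
  | cons e es ih =>
    intro Q hvalid hP
    obtain ⟨h1, h2, h3, h4, h5⟩ := hvalid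
    -- the invariant for the new set
    have hP' : ∀ c ∈ C, ∀ w, G.Adj c w → w ∉ H →
        (w ∈ applyEdit Q e ∧ w ∉ touchSet es) := by
      intro c hc w hadj hwH
      obtain ⟨hwQ, hwt⟩ := hP c hc w hadj hwH
      have hne : w ≠ e.1 := by
        intro h
        exact hwt (mem_touchSet.mpr ⟨e, List.mem_cons_self, h.symm⟩)
      have hwt' : w ∉ touchSet es := by
        intro h
        obtain ⟨e', he', he'2⟩ := mem_touchSet.mp h
        exact hwt (mem_touchSet.mpr ⟨e', List.mem_cons_of_mem e he', he'2⟩)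
      refine ⟨?_, hwt'⟩
      unfold applyEdit
      split
      · exact Finset.mem_insert_of_mem hwQ
      · exact Finset.mem_erase.mpr ⟨hne, hwQ⟩
    have hPvc : ∀ c ∈ C, ∀ w, G.Adj c w → w ∈ H ∨ w ∈ applyEdit Q e := by
      intro c hc w hadj
      by_cases hw : w ∈ H
      · exact Or.inl hw
      · exact Or.inr (hP' c hc w hadj hw).1
    by_cases hp : e.1 ∉ C ∧ e.1 ∉ H
    · -- edit kept
      have hfilter : (e :: es).filter (fun e => decide (e.1 ∉ C ∧ e.1 ∉ H))
          = e :: es.filter (fun e => decide (e.1 ∉ C ∧ e.1 ∉ H)) := by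
        simp [List.filter_cons, hp.1, hp.2]
      have hcomm : applyEdit (Ftr C H Q) e = Ftr C H (applyEdit Q e) :=
        Ftr_applyEdit C H Q e hp.1 hp.2
      obtain ⟨ihv, ihs⟩ := ih (applyEdit Q e) h5 hP'
      rw [hfilter]
      constructor
      · refine ⟨?_, ?_, ?_, ?_, ?_⟩
        · intro hb
          have he1 : e.1 ∉ Q := h1 hb
          simp only [Ftr, Finset.mem_union, Finset.mem_sdiff]
          push_neg
          exact ⟨fun h => absurd h he1, hp.2⟩
        · intro hb
          exact Finset.mem_union_left _ (Finset.mem_sdiff.mpr ⟨h2 hb, hp.1⟩)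
        · rw [hcomm]
          exact Ftr_isVC G C H (applyEdit Q e) hCind h3 hPvc
        · rw [hcomm]
          exact le_trans (Ftr_card_le G C H (applyEdit Q e) M hMinj hMC hCH h3) h4
        · rw [hcomm]; exact ihv
      · show applySeq (applyEdit (Ftr C H Q) e) _ = _
        rw [hcomm]
        exact ihs
    · -- edit skipped
      have hp' : e.1 ∈ C ∨ e.1 ∈ H := by
        by_contra h
        push_neg at h
        exact hp ⟨h.1, h.2⟩
      have hfilter : (e :: es).filter (fun e => decide (e.1 ∉ C ∧ e.1 ∉ H))
          = es.filter (fun e => decide (e.1 ∉ C ∧ e.1 ∉ H)) := by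
        rw [List.filter_cons]
        simp only [decide_eq_true_eq]
        rw [if_neg hp]
      have hskip : Ftr C H (applyEdit Q e) = Ftr C H Q :=
        Ftr_applyEdit_skip C H Q e hCH hp'
      obtain ⟨ihv, ihs⟩ := ih (applyEdit Q e) h5 hP'
      rw [hfilter, ← hskip]
      exact ⟨ihv, ihs⟩

end Aux

/-- Let `G` be bipartite, `S` and `T` vertex covers of size
at most `k`, and `η` an edit sequence valid at `S` with `η(S) = T`.  Let
`(C, H)` be an `η`-local crown (a crown in the subgraph of `G` induced by
`touch(η)`).  If `H ⊆ S`, `C ∩ S = ∅`, `H ⊆ T` and `C ∩ T = ∅`, then `η` is not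
a shortest edit sequence from `S` to `T`: there is a strictly shorter valid
edit sequence transforming `S` into `T`. -/
theorem stmt11 {V : Type} [DecidableEq V] (G : SimpleGraph V) (hbip : G.Colorable 2)
    (k : ℕ) (hk : 0 < k) (S T : Finset V)
    (hS : IsVC G S) (hSk : S.card ≤ k) (hT : IsVC G T) (hTk : T.card ≤ k)
    (η : List (Edit V)) (hηvalid : ValidAt G k S η) (hηT : applySeq S η = T)
    (C H : Finset V)
    -- `(C, H)` is a crown in the subgraph of `G` induced by `touch(η)`:
    (hCsub : C ⊆ touchSet η) (hHsub : H ⊆ touchSet η) (hCH : Disjoint C H)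
    (hCne : C.Nonempty)
    (hCind : ∀ u ∈ C, ∀ v ∈ C, ¬ G.Adj u v)
    (hHN : ∀ u : V, u ∈ H ↔ (u ∈ touchSet η ∧ u ∉ C ∧ ∃ c ∈ C, G.Adj c u))
    (hM : ∃ M : V → V, Set.InjOn M ↑H ∧ ∀ u ∈ H, M u ∈ C ∧ G.Adj u (M u))
    -- position of the crown relative to `S` and `T`:
    (hHS : H ⊆ S) (hCS : Disjoint C S) (hHT : H ⊆ T) (hCT : Disjoint C T) :
    ∃ η' : List (Edit V), ValidAt G k S η' ∧ applySeq S η' = T ∧ η'.length < η.length := by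
  obtain ⟨M, hMinj, hMC⟩ := hM
  -- initial invariant
  have hP0 : ∀ c ∈ C, ∀ w, G.Adj c w → w ∉ H → (w ∈ S ∧ w ∉ touchSet η) := by
    intro c hc w hadj hwH
    have hwC : w ∉ C := fun hw => hCind c hc w hw hadj
    have hwt : w ∉ touchSet η := by
      intro hwt
      exact hwH ((hHN w).mpr ⟨hwt, hwC, c, hc, hadj⟩)
    have hcS : c ∉ S := Finset.disjoint_left.mp hCS hc
    rcases hS hadj with h | h
    · exact absurd h hcS
    · exact ⟨h, hwt⟩
  obtain ⟨hval, hseq⟩ := main_induction G k C H M hMinj hMC hCH hCind η S hηvalid hP0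
  have hFS : Ftr C H S = S := by
    ext v
    simp only [Ftr, Finset.mem_union, Finset.mem_sdiff]
    constructor
    · rintro (⟨h, _⟩ | h)
      · exact h
      · exact hHS h
    · intro h
      exact Or.inl ⟨h, fun hc => Finset.disjoint_left.mp hCS hc h⟩
  have hFT : Ftr C H T = T := by
    ext v
    simp only [Ftr, Finset.mem_union, Finset.mem_sdiff]
    constructor
    · rintro (⟨h, _⟩ | h)
      · exact h
      · exact hHT h
    · intro h
      exact Or.inl ⟨h, fun hc => Finset.disjoint_left.mp hCT hc h⟩
  rw [hFS] at hval hseq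
  rw [hηT, hFT] at hseq
  refine ⟨η.filter (fun e => decide (e.1 ∉ C ∧ e.1 ∉ H)), hval, hseq, ?_⟩
  -- strict length inequality
  obtain ⟨c, hc⟩ := hCne
  obtain ⟨e, he, he1⟩ := mem_touchSet.mp (hCsub hc)
  have hle : (η.filter (fun e => decide (e.1 ∉ C ∧ e.1 ∉ H))).length ≤ η.length :=
    List.length_filter_le _ _
  rcases lt_or_eq_of_le hle with h | h
  · exact h
  · exfalso
    have : ∀ a ∈ η, (fun e : Edit V => decide (e.1 ∉ C ∧ e.1 ∉ H)) a = true := by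
      rw [← List.length_filter_eq_length_iff]
      exact h
    have := this e he
    simp only [decide_eq_true_eq] at this
    exact this.1 (he1 ▸ hc)
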